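/- Let B and C be n×n matrices over a field F with C invertible. Suppose that B·C⁻¹ has n distinct eigenvalues over the algebraic closure of F, and that for all x, y in the algebraic closure, the transpose of the left kernel of Bx − Cy equals its right kernel. Then B and C are symmetric matrices. -/

import Mathlib

open Matrix Polynomial

lemma eval_charpoly_aux {K : Type*} [Field K] {n : ℕ} (A : Matrix (Fin n) (Fin n) K) (t : K) :
    A.charpoly.eval t = (Matrix.scalar (Fin n) t - A).det := by
  rw [Matrix.charpoly, _root_.eval_det, Matrix.matPolyEquiv_charmatrix]
  simp

theorem stmt0 (F : Type*) [Field F] (n : ℕ) (B C : Matrix (Fin n) (Fin n) F)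
    (hC : IsUnit C)
    (hcard : ((B * C⁻¹).map (algebraMap F (AlgebraicClosure F))).charpoly.roots.card = n)
    (hnodup : ((B * C⁻¹).map (algebraMap F (AlgebraicClosure F))).charpoly.roots.Nodup)
    (hker : ∀ (x y : AlgebraicClosure F) (v : Fin n → AlgebraicClosure F),
      Matrix.vecMul v (x • B.map (algebraMap F (AlgebraicClosure F)) -
        y • C.map (algebraMap F (AlgebraicClosure F))) = 0 ↔
      Matrix.mulVec (x • B.map (algebraMap F (AlgebraicClosure F)) -
        y • C.map (algebraMap F (AlgebraicClosure F))) v = 0) :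
    B.IsSymm ∧ C.IsSymm := by
  set K := AlgebraicClosure F
  set f := algebraMap F K with hf
  set A : Matrix (Fin n) (Fin n) K := (B * C⁻¹).map f with hA
  set B' : Matrix (Fin n) (Fin n) K := B.map f with hB'
  set C' : Matrix (Fin n) (Fin n) K := C.map f with hC'def
  have hCdet : IsUnit C.det := (Matrix.isUnit_iff_isUnit_det C).mp hC
  have hC'det : IsUnit C'.det := by
    have : C'.det = f C.det := by
      rw [hC'def, ← RingHom.mapMatrix_apply, ← RingHom.map_det]
    rw [this]; exact hCdet.map f
  -- A * C' = B'
  have hAC : A * C' = B' := by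
    rw [hA, hC'def, hB', ← Matrix.map_mul, Matrix.mul_assoc,
      Matrix.nonsing_inv_mul C hCdet, Matrix.mul_one]
  -- enumerate the roots
  set l := A.charpoly.roots.toList with hl
  have hlen : l.length = n := by rw [hl, Multiset.length_toList, hcard]
  have hlnd : l.Nodup := by
    rw [hl, ← Multiset.coe_nodup, Multiset.coe_toList]; exact hnodup
  set lam : Fin n → K := fun i => l.get (Fin.cast hlen.symm i) with hlam
  have hlaminj : Function.Injective lam := by
    intro i j hij
    have := (List.nodup_iff_injective_get.mp hlnd) hij
    exact Fin.ext (by simpa using congrArg Fin.val this)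
  have hlamroot : ∀ i, A.charpoly.IsRoot (lam i) := by
    intro i
    have : lam i ∈ A.charpoly.roots := by
      rw [hlam, ← Multiset.mem_toList, ← hl]; exact l.get_mem _
    exact isRoot_of_mem_roots this
  -- eigenvectors of A
  have hu : ∀ i : Fin n, ∃ u : Fin n → K, u ≠ 0 ∧ A.mulVec u = lam i • u := by
    intro i
    have hdet : (Matrix.scalar (Fin n) (lam i) - A).det = 0 := by
      rw [← eval_charpoly_aux]; exact hlamroot i
    obtain ⟨u, hu0, huv⟩ := (Matrix.exists_mulVec_eq_zero_iff).mpr hdet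
    refine ⟨u, hu0, ?_⟩
    rw [Matrix.sub_mulVec] at huv
    have h1 : (Matrix.scalar (Fin n) (lam i)).mulVec u = lam i • u := by
      ext j
      simp [Matrix.scalar, Matrix.mulVec_diagonal, Pi.algebraMap_apply]
    rw [h1] at huv
    exact (sub_eq_zero.mp huv).symm
  choose u hu0 huA using hu
  -- define v
  set v : Fin n → (Fin n → K) := fun i => C'⁻¹.mulVec (u i) with hv
  have hCv : ∀ i, C'.mulVec (v i) = u i := by
    intro i
    rw [hv, Matrix.mulVec_mulVec, Matrix.mul_nonsing_inv C' hC'det, Matrix.one_mulVec]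
  have hBv : ∀ i, B'.mulVec (v i) = lam i • C'.mulVec (v i) := by
    intro i
    rw [← hAC, ← Matrix.mulVec_mulVec, hCv, huA]
  have hv0 : ∀ i, v i ≠ 0 := by
    intro i hvi
    apply hu0 i
    rw [← hCv i, hvi, Matrix.mulVec_zero]
  -- right kernel membership, hence left kernel membership
  have hrk : ∀ i, Matrix.mulVec ((1:K) • B' - lam i • C') (v i) = 0 := by
    intro i
    rw [one_smul, Matrix.sub_mulVec, Matrix.smul_mulVec, hBv i, sub_self]
  have hsm : ∀ (a : K) (M : Matrix (Fin n) (Fin n) K) (w : Fin n → K),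
      Matrix.vecMul w (a • M) = a • Matrix.vecMul w M := by
    intro a M w; ext j
    simp [Matrix.vecMul, dotProduct, Finset.mul_sum, mul_left_comm, mul_comm]
  have hlk : ∀ i, Matrix.vecMul (v i) B' = lam i • Matrix.vecMul (v i) C' := by
    intro i
    have := (hker 1 (lam i) (v i)).mpr (hrk i)
    rw [one_smul, Matrix.vecMul_sub, hsm, sub_eq_zero] at this
    exact this
  -- key orthogonality
  have key : ∀ M : Matrix (Fin n) (Fin n) K, (∀ i, B'.mulVec (v i) = lam i • C'.mulVec (v i)) →
      True := fun _ _ => trivial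
  have hCorth : ∀ i j, i ≠ j → dotProduct (v i) (C'.mulVec (v j)) = 0 := by
    intro i j hij
    have h1 : dotProduct (v i) (B'.mulVec (v j)) =
        lam j * dotProduct (v i) (C'.mulVec (v j)) := by
      rw [hBv j, dotProduct_smul, smul_eq_mul]
    have h2 : dotProduct (v i) (B'.mulVec (v j)) =
        lam i * dotProduct (v i) (C'.mulVec (v j)) := by
      rw [Matrix.dotProduct_mulVec, hlk i, smul_dotProduct, smul_eq_mul,
        ← Matrix.dotProduct_mulVec]
    have h3 : (lam j - lam i) * dotProduct (v i) (C'.mulVec (v j)) = 0 := by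
      rw [sub_mul, ← h1, ← h2, sub_self]
    rcases mul_eq_zero.mp h3 with h | h
    · exact absurd (hlaminj (sub_eq_zero.mp h)) hij.symm
    · exact h
  have hBorth : ∀ i j, i ≠ j → dotProduct (v i) (B'.mulVec (v j)) = 0 := by
    intro i j hij
    rw [hBv j, dotProduct_smul, smul_eq_mul, hCorth i j hij, mul_zero]
  -- the matrix V with rows v i is invertible
  set V : Matrix (Fin n) (Fin n) K := Matrix.of (fun i j => v i j) with hV
  have hVrows : LinearIndependent K (fun i => V i) := by
    have huind : LinearIndependent K u := by
      apply Module.End.eigenvectors_linearIndependent' (Matrix.mulVecLin A) lam hlaminj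
      intro i
      constructor
      · rw [Module.End.mem_eigenspace_iff, Matrix.mulVecLin_apply, huA]
      · exact hu0 i
    have : LinearIndependent K (C'.mulVecLin ∘ v) := by
      have hcomp : C'.mulVecLin ∘ v = u := by
        funext i; simp only [Function.comp_apply, Matrix.mulVecLin_apply, hCv]
      rw [hcomp]; exact huind
    exact LinearIndependent.of_comp C'.mulVecLin this
  have hVunit : IsUnit V := Matrix.linearIndependent_rows_iff_isUnit.mp hVrows
  have hVdet : IsUnit V.det := (Matrix.isUnit_iff_isUnit_det V).mp hVunit
  have hVtdet : IsUnit Vᵀ.det := by rwa [Matrix.det_transpose]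
  -- entry formula
  have entry : ∀ (M : Matrix (Fin n) (Fin n) K) i j,
      (V * M * Vᵀ) i j = dotProduct (v i) (M.mulVec (v j)) := by
    intro M i j
    rw [Matrix.dotProduct_mulVec]
    simp only [Matrix.mul_apply, Matrix.transpose_apply, Matrix.vecMul, dotProduct,
      hV, Matrix.of_apply, Finset.sum_mul]
    change ∑ x, (∑ y, v i y * M y x) * v j x = ∑ x, ∑ y, v i y * M y x * v j x
    exact Finset.sum_congr rfl fun _ _ => Finset.sum_mul _ _ _
  -- symmetry of conjugated matrices
  have symmconj : ∀ M : Matrix (Fin n) (Fin n) K,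
      (∀ i j, i ≠ j → dotProduct (v i) (M.mulVec (v j)) = 0) → Mᵀ = M := by
    intro M hM
    have hsym : V * M * Vᵀ = V * Mᵀ * Vᵀ := by
      have h1 : (V * M * Vᵀ)ᵀ = V * Mᵀ * Vᵀ := by
        rw [Matrix.transpose_mul, Matrix.transpose_mul, Matrix.transpose_transpose,
          Matrix.mul_assoc]
      rw [← h1]
      ext i j
      rw [Matrix.transpose_apply, entry, entry]
      rcases eq_or_ne i j with rfl | hij
      · rfl
      · rw [hM i j hij, hM j i (Ne.symm hij)]
    have e1 : ∀ N : Matrix (Fin n) (Fin n) K, V⁻¹ * (V * N * Vᵀ) * Vᵀ⁻¹ = N := by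
      intro N
      simp only [Matrix.mul_assoc]
      rw [Matrix.mul_nonsing_inv _ hVtdet, Matrix.mul_one, ← Matrix.mul_assoc,
        Matrix.nonsing_inv_mul _ hVdet, Matrix.one_mul]
    have h2 : M = Mᵀ := by
      have h3 := congrArg (fun X => V⁻¹ * X * Vᵀ⁻¹) hsym
      rw [e1 M, e1 Mᵀ] at h3
      exact h3
    exact h2.symm
  have hC'symm : C'ᵀ = C' := symmconj C' hCorth
  have hB'symm : B'ᵀ = B' := symmconj B' hBorth
  have hfinj : Function.Injective f := f.injective
  constructor
  · rw [Matrix.IsSymm]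
    ext i j
    apply hfinj
    have := congrFun (congrFun hB'symm i) j
    simpa [hB', Matrix.transpose_apply, Matrix.map_apply] using this
  · rw [Matrix.IsSymm]
    ext i j
    apply hfinj
    have := congrFun (congrFun hC'symm i) j
    simpa [hC'def, Matrix.transpose_apply, Matrix.map_apply] using this
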